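/- Let X be a compact metric space, T : X → X a homeomorphism, and D ⊆ X a closed set. Then sup{μ(D) : μ ∈ M_T(X)} ≥ sup{d̄_Ban({i ∈ ℤ : T^i(x) ∈ D}) : x ∈ X}, where M_T(X) is the set of T-invariant Borel probability measures on X. -/

import Mathlib

open MeasureTheory

/-- Upper Banach density of a subset of `ℤ`:
`inf_{N ∈ ℕ} sup_{i ∈ ℤ} |A ∩ [i, i+N)| / N`. -/
noncomputable def ubd (A : Set ℤ) : ℝ :=
  ⨅ N : ℕ+, ⨆ i : ℤ,
    (∑ n ∈ Finset.Ico i (i + (N : ℤ)), Set.indicator A (fun _ => (1 : ℝ)) n) / (N : ℝ)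

open Filter NNReal ENNReal Topology BoundedContinuousFunction TopologicalSpace

/-- Key construction: for any point `x`, there is a `T`-invariant Borel probability
measure `μ` with `μ D ≥` the upper Banach density of the visit times of `x` to `D`. -/
theorem exists_invariant_measure_ubd_le
    {X : Type*} [MetricSpace X] [CompactSpace X] [MeasurableSpace X] [BorelSpace X]
    (T : X ≃ₜ X) (D : Set X) (hD : IsClosed D) (x : X) :
    ∃ μ : Measure X, IsProbabilityMeasure μ ∧ Measure.map (T : X → X) μ = μ ∧
      ENNReal.ofReal (ubd {i : ℤ | (T.toEquiv ^ i) x ∈ D}) ≤ μ D := by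
  classical
  set A : Set ℤ := {i : ℤ | (T.toEquiv ^ i) x ∈ D} with hA
  set p : ℤ → X := fun n => (T.toEquiv ^ n) x with hp
  have hstep : ∀ n : ℤ, p (n + 1) = T (p n) := by
    intro n
    show (T.toEquiv ^ (n + 1)) x = T ((T.toEquiv ^ n) x)
    rw [show n + 1 = 1 + n from add_comm n 1, zpow_one_add]
    rfl
  -- the quantity `F N i` appearing in the definition of `ubd`
  set F : ℕ+ → ℤ → ℝ := fun N i =>
    (∑ n ∈ Finset.Ico i (i + (N : ℤ)), Set.indicator A (fun _ => (1 : ℝ)) n) / (N : ℝ) with hF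
  have hFnonneg : ∀ N i, 0 ≤ F N i := by
    intro N i
    apply div_nonneg _ (by positivity)
    exact Finset.sum_nonneg fun n _ => Set.indicator_nonneg (fun _ _ => zero_le_one) n
  have hbb : BddBelow (Set.range fun N : ℕ+ => ⨆ i : ℤ, F N i) := by
    refine ⟨0, ?_⟩
    rintro _ ⟨N, rfl⟩
    exact Real.iSup_nonneg (hFnonneg N)
  have hubd : ubd A = ⨅ N : ℕ+, ⨆ i : ℤ, F N i := rfl
  have halesup : ∀ N : ℕ+, ubd A ≤ ⨆ i : ℤ, F N i := by
    intro N; rw [hubd]; exact ciInf_le hbb N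
  have hidx' : ∀ N : ℕ+, ∃ i : ℤ, ubd A - 1 / (N : ℝ) < F N i := by
    intro N
    refine exists_lt_of_lt_ciSup (lt_of_lt_of_le ?_ (halesup N))
    have : (0:ℝ) < 1 / (N : ℝ) := by positivity
    linarith
  choose idx hidx using hidx'
  -- the ultrafilter along which we take limits
  set U : Ultrafilter ℕ+ := Ultrafilter.of atTop with hUdef
  have hU : (U : Filter ℕ+) ≤ atTop := Ultrafilter.of_le _
  have hNtop : Tendsto (fun N : ℕ+ => ((N : ℕ) : ℝ)) atTop atTop := by
    apply tendsto_natCast_atTop_atTop.comp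
    exact tendsto_atTop_atTop_of_monotone (fun a b h => by exact_mod_cast h)
      (fun b => ⟨⟨b + 1, Nat.succ_pos b⟩, by simp⟩)
  -- empirical averages of a bounded continuous function over the chosen windows
  set φ : ℕ+ → (X →ᵇ ℝ≥0) → ℝ≥0 := fun N f =>
    (∑ n ∈ Finset.Ico (idx N) (idx N + (N : ℤ)), f (p n)) / ((N : ℕ) : ℝ≥0) with hφ
  have hNne : ∀ N : ℕ+, ((N : ℕ) : ℝ≥0) ≠ 0 := fun N => by positivity
  have hcard : ∀ N : ℕ+, (Finset.Ico (idx N) (idx N + (N : ℤ))).card = (N : ℕ) := by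
    intro N; rw [Int.card_Ico]; omega
  have hfC : ∀ (f : X →ᵇ ℝ≥0) (y : X), f y ≤ nndist f 0 := by
    intro f y
    have h := BoundedContinuousFunction.dist_coe_le_dist (f := f) (g := 0) y
    simp only [BoundedContinuousFunction.coe_zero, Pi.zero_apply] at h
    rw [NNReal.dist_eq] at h
    have h2 : (f y : ℝ) ≤ dist f 0 := by simpa using h
    rw [dist_nndist] at h2
    exact_mod_cast h2
  have hφbound : ∀ N f, φ N f ∈ Set.Icc 0 (nndist f 0) := by
    intro N f
    refine ⟨zero_le, ?_⟩
    simp only [hφ]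
    have hsum : (∑ n ∈ Finset.Ico (idx N) (idx N + (N : ℤ)), f (p n)) ≤
        (Finset.Ico (idx N) (idx N + (N : ℤ))).card • nndist f 0 :=
      Finset.sum_le_card_nsmul _ _ _ fun n _ => hfC f (p n)
    rw [hcard N] at hsum
    calc (∑ n ∈ Finset.Ico (idx N) (idx N + (N : ℤ)), f (p n)) / ((N : ℕ) : ℝ≥0)
        ≤ ((N : ℕ) • nndist f 0) / ((N : ℕ) : ℝ≥0) := by gcongr
      _ = nndist f 0 := by rw [nsmul_eq_mul, mul_div_cancel_left₀ _ (hNne N)]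
  have hex : ∀ f : X →ᵇ ℝ≥0, ∃ L, Tendsto (fun N => φ N f) (U : Filter ℕ+) (𝓝 L) := by
    intro f
    obtain ⟨L, _, hL⟩ := (isCompact_Icc (a := (0:ℝ≥0)) (b := nndist f 0)).ultrafilter_le_nhds
      (U.map (fun N => φ N f))
      (by rw [Ultrafilter.coe_map]
          exact le_principal_iff.mpr (Filter.mem_map.mpr (by
            filter_upwards [] using fun N => hφbound N f)))
    exact ⟨L, hL⟩
  choose Lam hLam using hex
  -- basic properties of the limit functional `Lam`
  have hadd : ∀ f g : X →ᵇ ℝ≥0, Lam (f + g) = Lam f + Lam g := by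
    intro f g
    refine tendsto_nhds_unique (hLam (f + g)) (((hLam f).add (hLam g)).congr fun N => ?_)
    simp only [hφ, BoundedContinuousFunction.add_apply]
    rw [Finset.sum_add_distrib, add_div]
  have hsmul : ∀ (c : ℝ≥0) (f : X →ᵇ ℝ≥0), Lam (c • f) = c * Lam f := by
    intro c f
    refine tendsto_nhds_unique (hLam (c • f)) (((hLam f).const_mul c).congr fun N => ?_)
    simp only [hφ, BoundedContinuousFunction.coe_smul, Pi.smul_apply, smul_eq_mul]
    rw [← Finset.mul_sum, mul_div_assoc]
  have hmono : ∀ f g : X →ᵇ ℝ≥0, (∀ y, f y ≤ g y) → Lam f ≤ Lam g := by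
    intro f g hfg
    refine le_of_tendsto_of_tendsto' (hLam f) (hLam g) fun N => ?_
    simp only [hφ]
    gcongr
    exact hfg _
  have hone : Lam 1 = 1 := by
    refine tendsto_nhds_unique (hLam 1) (tendsto_const_nhds.congr fun N => ?_)
    simp only [hφ, BoundedContinuousFunction.coe_one, Pi.one_apply]
    rw [Finset.sum_const, hcard N, nsmul_eq_mul, mul_one, div_self (hNne N)]
  have hC0 : ∀ C : ℝ≥0, Tendsto (fun N : ℕ+ => C / ((N : ℕ) : ℝ≥0)) (U : Filter ℕ+) (𝓝 0) := by
    intro C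
    have hreal : Tendsto (fun N : ℕ+ => ((C / ((N : ℕ) : ℝ≥0) : ℝ≥0) : ℝ)) atTop
        (𝓝 ((0 : ℝ≥0) : ℝ)) := by
      simp only [NNReal.coe_div, NNReal.coe_natCast, NNReal.coe_zero]
      exact tendsto_const_nhds.div_atTop hNtop
    exact (NNReal.tendsto_coe.mp hreal).mono_left hU
  -- invariance of the functional
  have hTinv : ∀ f : X →ᵇ ℝ≥0, Lam (f.compContinuous (T : C(X, X))) = Lam f := by
    intro f
    set fT := f.compContinuous (T : C(X, X)) with hfT
    set C := nndist f 0 with hC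
    have hN1 : ∀ N : ℕ+, (1 : ℤ) ≤ (N : ℤ) := fun N => by exact_mod_cast N.one_le
    -- the two window sums differ only by boundary terms
    have hkey : ∀ N : ℕ+, φ N fT ≤ φ N f + C / ((N : ℕ) : ℝ≥0) ∧
        φ N f ≤ φ N fT + C / ((N : ℕ) : ℝ≥0) := by
      intro N
      set i := idx N with hi
      have hN1' := hN1 N
      have hsA : (∑ n ∈ Finset.Ico i (i + (N : ℤ)), fT (p n)) =
          ∑ n ∈ Finset.Ico (i + 1) (i + (N : ℤ) + 1), f (p n) := by
        have h1 : ∀ n : ℤ, fT (p n) = f (p (n + 1)) := by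
          intro n
          rw [hstep]
          rfl
        rw [show Finset.Ico (i + 1) (i + (N : ℤ) + 1) =
            Finset.map (addRightEmbedding 1) (Finset.Ico i (i + (N : ℤ))) from
            (Finset.map_add_right_Ico i (i + (N:ℤ)) 1).symm, Finset.sum_map]
        exact Finset.sum_congr rfl fun n _ => by rw [h1 n]; rfl
      have hIco1 : Finset.Ico (i + 1) (i + (N : ℤ) + 1) =
          insert (i + (N : ℤ)) (Finset.Ico (i + 1) (i + (N : ℤ))) := by
        ext n; simp only [Finset.mem_Ico, Finset.mem_insert]; omega
      have hIco2 : Finset.Ico i (i + (N : ℤ)) =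
          insert i (Finset.Ico (i + 1) (i + (N : ℤ))) := by
        ext n; simp only [Finset.mem_Ico, Finset.mem_insert]; omega
      have hnm1 : (i + (N : ℤ)) ∉ Finset.Ico (i + 1) (i + (N : ℤ)) := by
        simp [Finset.mem_Ico]
      have hnm2 : i ∉ Finset.Ico (i + 1) (i + (N : ℤ)) := by
        simp [Finset.mem_Ico]
      set t := ∑ n ∈ Finset.Ico (i + 1) (i + (N : ℤ)), f (p n) with ht
      have hsA' : (∑ n ∈ Finset.Ico i (i + (N : ℤ)), fT (p n)) = t + f (p (i + (N : ℤ))) := by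
        rw [hsA, hIco1, Finset.sum_insert hnm1, add_comm]
      have hsB' : (∑ n ∈ Finset.Ico i (i + (N : ℤ)), f (p n)) = f (p i) + t := by
        rw [hIco2, Finset.sum_insert hnm2]
      constructor
      · show φ N fT ≤ φ N f + C / ((N : ℕ) : ℝ≥0)
        simp only [hφ]
        rw [hsA', hsB', ← add_div]
        have hnum : t + f (p (i + (N : ℤ))) ≤ (f (p i) + t) + C :=
          calc t + f (p (i + (N : ℤ))) ≤ t + C := by gcongr; exact hfC f _
            _ ≤ (f (p i) + t) + C := by gcongr; exact le_add_self
        exact div_le_div_of_nonneg_right hnum zero_le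
      · show φ N f ≤ φ N fT + C / ((N : ℕ) : ℝ≥0)
        simp only [hφ]
        rw [hsA', hsB', ← add_div]
        have hnum : f (p i) + t ≤ (t + f (p (i + (N : ℤ)))) + C :=
          calc f (p i) + t ≤ C + t := by gcongr; exact hfC f _
            _ ≤ C + (t + f (p (i + (N : ℤ)))) := by gcongr; exact le_self_add
            _ = (t + f (p (i + (N : ℤ)))) + C := add_comm _ _
        exact div_le_div_of_nonneg_right hnum zero_le
    have h1 : Lam fT ≤ Lam f := by
      have := le_of_tendsto_of_tendsto' (hLam fT) ((hLam f).add (hC0 C))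
        (fun N => (hkey N).1)
      simpa using this
    have h2 : Lam f ≤ Lam fT := by
      have := le_of_tendsto_of_tendsto' (hLam f) ((hLam fT).add (hC0 C))
        (fun N => (hkey N).2)
      simpa using this
    exact le_antisymm h1 h2
  have hTinv' : ∀ f : X →ᵇ ℝ≥0, Lam (f.compContinuous (T.symm : C(X, X))) = Lam f := by
    intro f
    have h := hTinv (f.compContinuous (T.symm : C(X, X)))
    have he : (f.compContinuous (T.symm : C(X, X))).compContinuous (T : C(X, X)) = f := by
      ext y; simp
    rw [he] at h
    exact h.symm
  -- lower bound for the functional on super-level functions of `D`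
  have hαf : ∀ f : X →ᵇ ℝ≥0, (∀ z ∈ D, 1 ≤ f z) → Real.toNNReal (ubd A) ≤ Lam f := by
    intro f hf
    have hcoe : Tendsto (fun N => ((φ N f : ℝ≥0) : ℝ)) (U : Filter ℕ+) (𝓝 ((Lam f : ℝ≥0) : ℝ)) :=
      NNReal.tendsto_coe.mpr (hLam f)
    have hlow : Tendsto (fun N : ℕ+ => ubd A - 1 / ((N : ℕ) : ℝ)) (U : Filter ℕ+) (𝓝 (ubd A)) := by
      have h0 : Tendsto (fun N : ℕ+ => ubd A - 1 / ((N : ℕ) : ℝ)) atTop (𝓝 (ubd A - 0)) :=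
        tendsto_const_nhds.sub (tendsto_const_nhds.div_atTop hNtop)
      rw [sub_zero] at h0
      exact h0.mono_left hU
    have hle : ∀ N : ℕ+, ubd A - 1 / ((N : ℕ) : ℝ) ≤ ((φ N f : ℝ≥0) : ℝ) := by
      intro N
      refine le_trans (hidx N).le ?_
      simp only [hφ, hF]
      push_cast
      have hsum : (∑ n ∈ Finset.Ico (idx N) (idx N + ((N:ℕ) : ℤ)), A.indicator (fun _ => (1:ℝ)) n)
          ≤ ∑ n ∈ Finset.Ico (idx N) (idx N + ((N:ℕ) : ℤ)), ((f (p n) : ℝ≥0) : ℝ) := by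
        refine Finset.sum_le_sum fun n _ => ?_
        by_cases hnA : n ∈ A
        · rw [Set.indicator_of_mem hnA]
          exact_mod_cast hf (p n) hnA
        · rw [Set.indicator_of_notMem hnA]
          positivity
      have hNpos : (0:ℝ) < ((N:ℕ) : ℝ) := by positivity
      exact div_le_div_of_nonneg_right hsum hNpos.le
    have : ubd A ≤ ((Lam f : ℝ≥0) : ℝ) := le_of_tendsto_of_tendsto' hlow hcoe hle
    exact Real.toNNReal_le_iff_le_coe.mpr this
  -- bundle the functional as a linear map and form the Riesz content
  set Λ : (X →ᵇ ℝ≥0) →ₗ[ℝ≥0] ℝ≥0 :=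
    { toFun := Lam
      map_add' := hadd
      map_smul' := hsmul } with hΛ
  have hΛapp : ∀ f, Λ f = Lam f := fun f => rfl
  set Λc : CompactlySupportedContinuousMap X ℝ≥0 →ₗ[ℝ≥0] ℝ≥0 :=
    { toFun := fun f => Λ f.toBoundedContinuousFunction
      map_add' := fun f g => by rw [← map_add]; rfl
      map_smul' := fun c f => by rw [RingHom.id_apply, ← map_smul]; rfl } with hΛc
  have hΛcapp : ∀ f, Λc f = Lam f.toBoundedContinuousFunction := fun f => rfl
  have hni := rieszContentAux_image_nonempty Λc
  -- additivity on disjoint compact sets, via Urysohn's lemma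
  have hsup_disjoint : ∀ K₁ K₂ : Compacts X, Disjoint (K₁ : Set X) K₂ →
      IsClosed (K₁ : Set X) → IsClosed (K₂ : Set X) →
      rieszContentAux Λc (K₁ ⊔ K₂) = rieszContentAux Λc K₁ + rieszContentAux Λc K₂ := by
    intro K₁ K₂ hdis hc1 hc2
    refine le_antisymm (rieszContentAux_sup_le Λc K₁ K₂) ?_
    refine le_csInf (hni (K₁ ⊔ K₂)) ?_
    rintro b ⟨f, hfK, rfl⟩
    obtain ⟨g, hg0, hg1, hg01⟩ := exists_continuous_zero_one_of_isClosed hc2 hc1 hdis.symm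
    set f1 : CompactlySupportedContinuousMap X ℝ≥0 := CompactlySupportedContinuousMap.continuousMapEquiv
      ⟨fun y => f y * Real.toNNReal (g y),
       f.continuous.mul (continuous_real_toNNReal.comp g.continuous)⟩ with hf1
    set f2 : CompactlySupportedContinuousMap X ℝ≥0 := CompactlySupportedContinuousMap.continuousMapEquiv
      ⟨fun y => f y * (1 - Real.toNNReal (g y)),
       f.continuous.mul (continuous_const.sub (continuous_real_toNNReal.comp g.continuous))⟩
       with hf2
    have hgle1 : ∀ y, Real.toNNReal (g y) ≤ 1 := by
      intro y
      exact Real.toNNReal_le_iff_le_coe.mpr (by simpa using (hg01 y).2)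
    have hf12 : f1 + f2 = f := by
      ext y
      have hy : f y * Real.toNNReal (g y) + f y * (1 - Real.toNNReal (g y)) = f y := by
        rw [← mul_add, add_tsub_cancel_of_le (hgle1 y), mul_one]
      exact congrArg NNReal.toReal hy
    have h1 : rieszContentAux Λc K₁ ≤ Λc f1 := by
      refine rieszContentAux_le Λc fun y hy => ?_
      have hgy : g y = 1 := hg1 hy
      show (1 : ℝ≥0) ≤ f y * Real.toNNReal (g y)
      rw [hgy]
      simp only [Real.toNNReal_one, mul_one]
      exact hfK y (Set.mem_union_left _ hy)
    have h2 : rieszContentAux Λc K₂ ≤ Λc f2 := by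
      refine rieszContentAux_le Λc fun y hy => ?_
      have hgy : g y = 0 := hg0 hy
      show (1 : ℝ≥0) ≤ f y * (1 - Real.toNNReal (g y))
      rw [hgy]
      simp only [Real.toNNReal_zero, tsub_zero, mul_one]
      exact hfK y (Set.mem_union_right _ hy)
    calc rieszContentAux Λc K₁ + rieszContentAux Λc K₂ ≤ Λc f1 + Λc f2 := add_le_add h1 h2
      _ = Λc (f1 + f2) := (map_add Λc f1 f2).symm
      _ = Λc f := by rw [hf12]
  set con : Content X :=
    { toFun := rieszContentAux Λc
      mono' := fun K₁ K₂ h => rieszContentAux_mono Λc h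
      sup_disjoint' := hsup_disjoint
      sup_le' := rieszContentAux_sup_le Λc } with hcon
  -- invariance of the content under `T`
  have hTK : ∀ K : Compacts X, rieszContentAux Λc (K.map T T.continuous) = rieszContentAux Λc K := by
    intro K
    refine le_antisymm ?_ ?_
    · refine le_csInf (hni K) ?_
      rintro b ⟨f, hf, rfl⟩
      refine le_trans (rieszContentAux_le Λc (K := K.map T T.continuous)
        (f := CompactlySupportedContinuousMap.continuousMapEquiv ((f : C(X, ℝ≥0)).comp (T.symm : C(X, X)))) ?_) (le_of_eq (hTinv' f.toBoundedContinuousFunction))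
      rintro y ⟨z, hz, rfl⟩
      show (1 : ℝ≥0) ≤ f (T.symm (T z))
      simpa using hf z hz
    · refine le_csInf (hni (K.map T T.continuous)) ?_
      rintro b ⟨f, hf, rfl⟩
      refine le_trans (rieszContentAux_le Λc (K := K)
        (f := CompactlySupportedContinuousMap.continuousMapEquiv ((f : C(X, ℝ≥0)).comp (T : C(X, X)))) ?_) (le_of_eq (hTinv f.toBoundedContinuousFunction))
      intro z hz
      show (1 : ℝ≥0) ≤ f (T z)
      exact hf (T z) ⟨z, hz, rfl⟩
  set μ : Measure X := con.measure with hμ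
  -- μ is a probability measure
  have htop : con.toFun ⊤ = 1 := by
    refine le_antisymm ?_ ?_
    · have := rieszContentAux_le Λc (K := ⊤) (f := CompactlySupportedContinuousMap.continuousMapEquiv 1) (fun y _ => le_refl 1)
      rw [hΛcapp, show (CompactlySupportedContinuousMap.continuousMapEquiv 1 : CompactlySupportedContinuousMap X ℝ≥0).toBoundedContinuousFunction = 1 by ext; rfl, hone] at this
      exact this
    · refine le_csInf (hni ⊤) ?_
      rintro b ⟨f, hf, rfl⟩
      rw [hΛcapp, ← hone]
      exact hmono 1 f.toBoundedContinuousFunction fun y => hf y trivial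
  have hprob : IsProbabilityMeasure μ := by
    constructor
    rw [hμ, con.measure_apply MeasurableSet.univ,
      con.outerMeasure_of_isOpen Set.univ isOpen_univ]
    have hinner : con.innerContent ⟨Set.univ, isOpen_univ⟩ = (con.toFun ⊤ : ℝ≥0∞) := by
      refine le_antisymm ?_ (con.le_innerContent ⊤ _ (by exact subset_rfl))
      refine iSup_le fun K => iSup_le fun _ => ?_
      exact con.mono K ⊤ (Set.subset_univ _)
    rw [hinner, htop]
    rfl
  have hinvμ : Measure.map (T : X → X) μ = μ := by
    ext s hs
    rw [Measure.map_apply T.continuous.measurable hs, hμ,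
      con.measure_apply (hs.preimage T.continuous.measurable), con.measure_apply hs]
    refine con.outerMeasure_preimage T (fun K => ?_) s
    show ((rieszContentAux Λc (K.map T T.continuous) : ℝ≥0) : ℝ≥0∞) =
      ((rieszContentAux Λc K : ℝ≥0) : ℝ≥0∞)
    exact_mod_cast hTK K
  have hDm : ENNReal.ofReal (ubd A) ≤ μ D := by
    have hDc : IsCompact D := hD.isCompact
    rw [hμ, con.measure_apply hD.measurableSet]
    calc ENNReal.ofReal (ubd A) = ((Real.toNNReal (ubd A) : ℝ≥0) : ℝ≥0∞) := rfl
      _ ≤ ((con.toFun ⟨D, hDc⟩ : ℝ≥0) : ℝ≥0∞) := by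
          refine ENNReal.coe_le_coe.mpr ?_
          refine le_csInf (hni ⟨D, hDc⟩) ?_
          rintro b ⟨f, hf, rfl⟩
          exact hαf f.toBoundedContinuousFunction hf
      _ ≤ con.outerMeasure D := con.le_outerMeasure_compacts ⟨D, hDc⟩
  exact ⟨μ, hprob, hinvμ, hDm⟩

/-- For a homeomorphism `T` of a compact metric space and a closed set `D`, the supremum
of `μ(D)` over `T`-invariant Borel probability measures dominates the supremum over `x`
of the upper Banach density of the set of times the orbit of `x` visits `D`. -/
theorem sup_invMeasure_ge_sup_ubd_visits
    {X : Type*} [MetricSpace X] [CompactSpace X] [MeasurableSpace X] [BorelSpace X]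
    (T : X ≃ₜ X) (D : Set X) (hD : IsClosed D) :
    ⨆ x : X, ubd {i : ℤ | (T.toEquiv ^ i) x ∈ D} ≤
      ⨆ μ : {μ : Measure X //
        IsProbabilityMeasure μ ∧ Measure.map (T : X → X) μ = μ}, (μ.1 D).toReal := by
  rcases isEmpty_or_nonempty X with hX | hX
  · haveI : IsEmpty {μ : Measure X //
        IsProbabilityMeasure μ ∧ Measure.map (T : X → X) μ = μ} := by
      constructor
      rintro ⟨μ, hprob, -⟩
      have h1 : μ Set.univ = 1 := hprob.measure_univ
      rw [Set.univ_eq_empty_iff.mpr hX] at h1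
      simp at h1
    rw [Real.iSup_of_isEmpty, Real.iSup_of_isEmpty]
  · have hbdd : BddAbove (Set.range fun μ : {μ : Measure X //
        IsProbabilityMeasure μ ∧ Measure.map (T : X → X) μ = μ} => (μ.1 D).toReal) := by
      refine ⟨1, ?_⟩
      rintro _ ⟨μ, rfl⟩
      have hle : μ.1 D ≤ 1 := by
        haveI := μ.2.1
        exact prob_le_one
      calc (μ.1 D).toReal ≤ (1 : ℝ≥0∞).toReal := ENNReal.toReal_mono (by simp) hle
        _ = 1 := by simp
    refine Real.iSup_le (fun x => ?_) ?_
    · obtain ⟨μ, hprob, hinv, hge⟩ := exists_invariant_measure_ubd_le T D hD x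
      haveI := hprob
      have hne : μ D ≠ ⊤ := measure_ne_top μ D
      have h1 : ubd {i : ℤ | (T.toEquiv ^ i) x ∈ D} ≤ (μ D).toReal :=
        (ENNReal.ofReal_le_iff_le_toReal hne).mp hge
      exact h1.trans (le_ciSup hbdd ⟨μ, hprob, hinv⟩)
    · obtain ⟨μ, hprob, hinv, -⟩ :=
        exists_invariant_measure_ubd_le T D hD (Classical.arbitrary X)
      exact le_trans ENNReal.toReal_nonneg (le_ciSup hbdd ⟨μ, hprob, hinv⟩)
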